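/- Let ν = m ω_1 − k α_1 be the weight of the basis vector v^m_k of the irreducible sl_2-module L_m. Then for the operator p(t;H,E,F) = Σ_{j≥0} F^j E^j (1/j!) Π_{s=0}^{j−1} 1/(t−H−s) one has p((λ + ν/2, α_1^∨) − 1; H,E,F) v^m_k = [ Π_{j=0}^{k−1} ((λ,α_1^∨) + m/2 − j) / ((λ,α_1^∨) − m/2 + j) ] v^m_k, as an identity of rational functions of (λ,α_1^∨). -/

import Mathlib

/- STATEMENT 6: action of p(t;H,E,F) on the basis v^m_k of the irreducible
(m+1)-dimensional sl₂-module L_m, realized concretely as Fin (m+1) → ℂ with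
H, E, F given by their matrices in the basis v^m_0, …, v^m_m. -/

open scoped BigOperators

noncomputable section

/-- Matrix of `H` on `L_m`: `H v_k = (m - 2k) v_k`. -/
def Hmat (m : ℕ) : Matrix (Fin (m+1)) (Fin (m+1)) ℂ :=
  Matrix.diagonal fun k => (m : ℂ) - 2 * (k : ℕ)

/-- Matrix of `E` on `L_m`: `E v_k = (m - k + 1) v_{k-1}`. -/
def Emat (m : ℕ) : Matrix (Fin (m+1)) (Fin (m+1)) ℂ :=
  Matrix.of fun j k => if (k : ℕ) = (j : ℕ) + 1 then (m : ℂ) - (j : ℕ) else 0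

/-- Matrix of `F` on `L_m`: `F v_k = (k+1) v_{k+1}`. -/
def Fmat (m : ℕ) : Matrix (Fin (m+1)) (Fin (m+1)) ℂ :=
  Matrix.of fun j k => if (j : ℕ) = (k : ℕ) + 1 then ((j : ℕ) : ℂ) else 0

/-- The operator `p(t; H, E, F) = Σ_k F^k E^k (1/k!) Π_{j=0}^{k-1} (t - H - j)⁻¹`.
On `L_m` the series truncates (terms with `k > m` vanish since `E^{m+1} = 0`). -/
def pMat (m : ℕ) (t : ℂ) (H E F : Matrix (Fin (m+1)) (Fin (m+1)) ℂ) :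
    Matrix (Fin (m+1)) (Fin (m+1)) ℂ :=
  ∑ k ∈ Finset.range (m + 2),
    ((Nat.factorial k : ℂ))⁻¹ •
      (F ^ k * E ^ k *
        ((List.range k).map fun j =>
          Ring.inverse (t • (1 : Matrix (Fin (m+1)) (Fin (m+1)) ℂ) - H - (j : ℂ) • 1)).prod)

/-- The basis vector `v^m_k` of `L_m`. -/
def vvec (m : ℕ) (k : Fin (m+1)) : Fin (m+1) → ℂ := Pi.single k 1



open Finset

lemma vand (a b : ℂ) : ∀ k : ℕ,
    ∏ i ∈ range k, (a + b + i) =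
      ∑ j ∈ range (k+1), (k.choose j : ℂ) * (∏ i ∈ range j, (a + i)) *
        ∏ i ∈ range (k - j), (b + i)
  | 0 => by simp
  | (k+1) => by
      rw [prod_range_succ, vand a b k, Finset.sum_mul]
      have key : ∀ j ∈ range (k+1),
          (k.choose j : ℂ) * (∏ i ∈ range j, (a + i)) * (∏ i ∈ range (k - j), (b + i))
              * (a + b + k)
          = (k.choose j : ℂ) * (∏ i ∈ range (j+1), (a + i)) * (∏ i ∈ range (k - j), (b + i))
            + (k.choose j : ℂ) * (∏ i ∈ range j, (a + i)) * (∏ i ∈ range (k + 1 - j), (b + i)) := by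
        intro j hj
        rw [mem_range, Nat.lt_succ_iff] at hj
        have h1 : (a + b + k) = (a + j) + (b + ((k - j : ℕ) : ℂ)) := by
          rw [Nat.cast_sub hj]; ring
        have h2 : k + 1 - j = (k - j) + 1 := by omega
        rw [h1, mul_add, prod_range_succ, h2, prod_range_succ]
        ring
      rw [Finset.sum_congr rfl key, Finset.sum_add_distrib]
      have hR : ∑ j ∈ range (k+1+1), ((k+1).choose j : ℂ) * (∏ i ∈ range j, (a + i)) *
            ∏ i ∈ range (k + 1 - j), (b + i)
          = (∑ j ∈ range (k+1), (k.choose j : ℂ) * (∏ i ∈ range (j+1), (a + i)) *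
              ∏ i ∈ range (k - j), (b + i))
            + ((∑ j ∈ range (k+1), (k.choose (j+1) : ℂ) * (∏ i ∈ range (j+1), (a + i)) *
              ∏ i ∈ range (k - j), (b + i))
            + ∏ i ∈ range (k+1), (b + i)) := by
        rw [Finset.sum_range_succ' (fun j => ((k+1).choose j : ℂ) * (∏ i ∈ range j, (a + i)) *
              ∏ i ∈ range (k + 1 - j), (b + i)) (k+1)]
        have hterm : ∀ j ∈ range (k+1),
            ((k+1).choose (j+1) : ℂ) * (∏ i ∈ range (j+1), (a + i)) *
              ∏ i ∈ range (k + 1 - (j+1)), (b + i)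
            = (k.choose j : ℂ) * (∏ i ∈ range (j+1), (a + i)) * (∏ i ∈ range (k - j), (b + i))
              + (k.choose (j+1) : ℂ) * (∏ i ∈ range (j+1), (a + i)) *
                ∏ i ∈ range (k - j), (b + i) := by
          intro j _
          rw [Nat.choose_succ_succ, Nat.cast_add, Nat.succ_sub_succ_eq_sub]
          ring
        rw [Finset.sum_congr rfl hterm, Finset.sum_add_distrib]
        simp [add_assoc]
      rw [hR]
      congr 1
      have h2 : ∑ j ∈ range (k+1), (k.choose j : ℂ) * (∏ i ∈ range j, (a + i)) *
            ∏ i ∈ range (k + 1 - j), (b + i)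
          = (∑ j ∈ range k, (k.choose (j+1) : ℂ) * (∏ i ∈ range (j+1), (a + i)) *
              ∏ i ∈ range (k - j), (b + i)) + ∏ i ∈ range (k+1), (b + i) := by
        rw [Finset.sum_range_succ' (fun j => (k.choose j : ℂ) * (∏ i ∈ range j, (a + i)) *
              ∏ i ∈ range (k + 1 - j), (b + i)) k]
        simp [Nat.succ_sub_succ_eq_sub]
      have h3 : ∑ j ∈ range (k+1), (k.choose (j+1) : ℂ) * (∏ i ∈ range (j+1), (a + i)) *
            ∏ i ∈ range (k - j), (b + i)
          = ∑ j ∈ range k, (k.choose (j+1) : ℂ) * (∏ i ∈ range (j+1), (a + i)) *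
            ∏ i ∈ range (k - j), (b + i) := by
        rw [Finset.sum_range_succ]
        simp [Nat.choose_succ_self]
      rw [h2, h3]


lemma ascProd (n : ℕ) : ∀ j : ℕ, ∏ i ∈ range j, (n + i + 1) = (n+1).ascFactorial j
  | 0 => by simp
  | (j+1) => by
      rw [prod_range_succ, Nat.ascFactorial_succ, ascProd n j]; ring

lemma scalarSum (m k : ℕ) (hk : k ≤ m) (l : ℂ)
    (hden : ∀ j ∈ range k, l - (m:ℂ)/2 + (j:ℕ) ≠ 0) :
    ∑ j ∈ range (k+1), (Nat.factorial j : ℂ)⁻¹ *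
      ((∏ i ∈ range j, ((k - j + i + 1 : ℕ) : ℂ)) *
       ((∏ i ∈ range j, ((m:ℂ) - ((k - 1 - i : ℕ) : ℂ))) *
        (∏ s ∈ range j, ((l + ((m:ℂ) - 2*k)/2 - 1) - ((m:ℂ) - 2*k) - (s:ℕ))⁻¹)))
    = ∏ j ∈ range k, (l + (m:ℂ)/2 - (j:ℕ)) / (l - (m:ℂ)/2 + (j:ℕ)) := by
  have hy : ∀ j : ℕ, l - (m:ℂ)/2 + (j:ℕ) = (l - (m:ℂ)/2) + (j:ℕ) := fun j => by ring
  set y := l - (m:ℂ)/2 with hydef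
  set A := (m:ℂ) - k + 1 with hA
  set D := ∏ i ∈ range k, (y + (i:ℕ)) with hD
  have hden' : ∀ j < k, y + (j:ℕ) ≠ 0 := by
    intro j hj
    have := hden j (mem_range.mpr hj)
    rwa [hy] at this
  have hDne : D ≠ 0 := prod_ne_zero_iff.mpr (fun i hi => hden' i (mem_range.mp hi))
  apply mul_right_cancel₀ hDne
  rw [Finset.sum_mul]
  -- rewrite each term
  have hterm : ∀ j ∈ range (k+1),
      (Nat.factorial j : ℂ)⁻¹ *
        ((∏ i ∈ range j, ((k - j + i + 1 : ℕ) : ℂ)) *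
         ((∏ i ∈ range j, ((m:ℂ) - ((k - 1 - i : ℕ) : ℂ))) *
          (∏ s ∈ range j, ((l + ((m:ℂ) - 2*k)/2 - 1) - ((m:ℂ) - 2*k) - (s:ℕ))⁻¹))) * D
      = (k.choose j : ℂ) * (∏ i ∈ range j, (A + i)) * ∏ i ∈ range (k - j), (y + (i:ℕ)) := by
    intro j hj
    rw [mem_range, Nat.lt_succ_iff] at hj
    -- (a) F-coefficient
    have ha : (∏ i ∈ range j, ((k - j + i + 1 : ℕ) : ℂ))
        = (Nat.factorial j : ℂ) * (k.choose j : ℂ) := by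
      have : ∏ i ∈ range j, (k - j + i + 1) = Nat.factorial j * k.choose j := by
        rw [ascProd (k-j) j, Nat.ascFactorial_eq_factorial_mul_choose,
          Nat.sub_add_cancel hj]
      rw [← Nat.cast_prod] at *
      rw [this]; push_cast; ring
    -- (b) E-coefficient
    have hb : (∏ i ∈ range j, ((m:ℂ) - ((k - 1 - i : ℕ) : ℂ))) = ∏ i ∈ range j, (A + i) := by
      apply prod_congr rfl
      intro i hi
      rw [mem_range] at hi
      have h1 : (((k - 1 - i : ℕ)) : ℂ) = (k:ℂ) - 1 - i := by
        have : k - 1 - i = k - (1 + i) := by omega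
        rw [this, Nat.cast_sub (by omega)]
        push_cast; ring
      rw [h1, hA]; ring
    -- (c) denominators
    have hc : (∏ s ∈ range j, ((l + ((m:ℂ) - 2*k)/2 - 1) - ((m:ℂ) - 2*k) - (s:ℕ))⁻¹)
        = (∏ s ∈ range j, (y + ((k - 1 - s : ℕ):ℂ)))⁻¹ := by
      rw [← prod_inv_distrib]
      apply prod_congr rfl
      intro s hs
      rw [mem_range] at hs
      have h1 : (((k - 1 - s : ℕ)) : ℂ) = (k:ℂ) - 1 - s := by
        have : k - 1 - s = k - (1 + s) := by omega
        rw [this, Nat.cast_sub (by omega)]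
        push_cast; ring
      rw [h1, hydef]
      congr 1
      ring
    have hsplit : (∏ s ∈ range j, (y + ((k - 1 - s : ℕ):ℂ)))
        * (∏ i ∈ range (k - j), (y + (i:ℕ))) = D := by
      have h1 : (∏ s ∈ range j, (y + ((k - 1 - s : ℕ):ℂ)))
          = ∏ i ∈ range j, (y + (((k - j + i : ℕ)):ℂ)) := by
        rw [← Finset.prod_range_reflect (fun i => (y + (((k - j + i : ℕ)):ℂ))) j]
        apply prod_congr rfl
        intro s hs
        rw [mem_range] at hs
        congr 2
        omega
      rw [h1, hD, mul_comm]
      have h2 : k = (k - j) + j := by omega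
      rw [h2, Finset.prod_range_add]
      simp only [Nat.add_sub_cancel]
    have hPne : (∏ s ∈ range j, (y + ((k - 1 - s : ℕ):ℂ))) ≠ 0 := by
      apply prod_ne_zero_iff.mpr
      intro s hs
      rw [mem_range] at hs
      exact hden' _ (by omega)
    rw [ha, hb, hc]
    have hfac : (Nat.factorial j : ℂ) ≠ 0 := Nat.cast_ne_zero.mpr (Nat.factorial_ne_zero j)
    field_simp
    rw [← hsplit]
    ring
  rw [Finset.sum_congr rfl hterm, ← vand A y k]
  -- RHS
  have hR : (∏ j ∈ range k, (l + (m:ℂ)/2 - (j:ℕ)) / (y + (j:ℕ)))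
      = (∏ j ∈ range k, (y + (m:ℂ) - (j:ℕ))) / D := by
    rw [hD, ← prod_div_distrib]
    apply prod_congr rfl
    intro i _
    rw [hydef]
    ring
  rw [hR, div_mul_cancel₀ _ hDne,
    ← Finset.prod_range_reflect (fun i => y + (m:ℂ) - (i:ℕ)) k]
  apply prod_congr rfl
  intro i hi
  rw [mem_range] at hi
  have h1 : (((k - 1 - i : ℕ)) : ℂ) = (k:ℂ) - 1 - i := by
    have : k - 1 - i = k - (1 + i) := by omega
    rw [this, Nat.cast_sub (by omega)]
    push_cast; ring
  rw [h1, hA]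
  ring




lemma coeList (l : List ℕ) : (l.flatMap fun a => [(a:ℂ)]) = l.map (fun a : ℕ => (a:ℂ)) := by
  induction l with
  | nil => rfl
  | cons a l ih => simp [List.flatMap_cons]; rw [List.map_eq_flatMap]

lemma Hfac (m : ℕ) (t : ℂ) (s : ℕ) :
    t • (1 : Matrix (Fin (m+1)) (Fin (m+1)) ℂ) - Hmat m - ((s:ℕ):ℂ) • 1
      = Matrix.diagonal (fun i : Fin (m+1) => t - ((m:ℂ) - 2 * (i:ℕ)) - s) := by
  ext i j
  by_cases h : i = j <;>
    simp [Hmat, Matrix.diagonal, Matrix.one_apply, h, Matrix.smul_apply]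

lemma ringInverse_diagonal {n : Type*} [Fintype n] [DecidableEq n]
    (d : n → ℂ) (hd : ∀ i, d i ≠ 0) :
    Ring.inverse (Matrix.diagonal d) = Matrix.diagonal (fun i => (d i)⁻¹) := by
  have h1 : Matrix.diagonal d * Matrix.diagonal (fun i => (d i)⁻¹) = 1 := by
    rw [Matrix.diagonal_mul_diagonal,
      show (fun i => d i * (d i)⁻¹) = fun _ => (1:ℂ) from funext fun i => mul_inv_cancel₀ (hd i),
      Matrix.diagonal_one]
  have h2 : Matrix.diagonal (fun i => (d i)⁻¹) * Matrix.diagonal d = 1 := by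
    rw [Matrix.diagonal_mul_diagonal,
      show (fun i => (d i)⁻¹ * d i) = fun _ => (1:ℂ) from funext fun i => inv_mul_cancel₀ (hd i),
      Matrix.diagonal_one]
  exact Ring.inverse_unit ⟨Matrix.diagonal d, Matrix.diagonal (fun i => (d i)⁻¹), h1, h2⟩

lemma resProd (m : ℕ) (t : ℂ) (k : Fin (m+1)) (c : ℂ) :
    ∀ n : ℕ, (∀ (i : Fin (m+1)) (s : ℕ), s < n → t - ((m:ℂ) - 2 * (i:ℕ)) - s ≠ 0) →
    Matrix.mulVec
      (((List.range n).map (fun s : ℕ =>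
        Ring.inverse (t • (1 : Matrix (Fin (m+1)) (Fin (m+1)) ℂ) - Hmat m - ((s:ℕ):ℂ) • 1))).prod)
      (Pi.single k c)
      = Pi.single k ((∏ s ∈ range n, (t - ((m:ℂ) - 2 * (k:ℕ)) - s)⁻¹) * c)
  | 0, _ => by
      simp only [List.range_zero, List.map_nil, List.prod_nil, Matrix.one_mulVec,
        prod_range_zero, one_mul]
  | (n+1), h => by
      rw [List.range_succ, List.map_append, List.prod_append]
      simp only [List.map_cons, List.map_nil, List.prod_cons, List.prod_nil, mul_one]
      rw [← Matrix.mulVec_mulVec, Hfac,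
        ringInverse_diagonal _ (fun i => h i n (Nat.lt_succ_self n)),
        Matrix.diagonal_mulVec_single,
        resProd m t k _ n (fun i s hs => h i s (Nat.lt_succ_of_lt hs)),
        prod_range_succ, mul_assoc]

lemma Estep (m : ℕ) (s : Fin (m+1)) (hs : 1 ≤ (s:ℕ)) (c : ℂ) :
    (Emat m).mulVec (Pi.single s c)
      = Pi.single (⟨(s:ℕ) - 1, by omega⟩ : Fin (m+1)) (((m:ℂ) - (((s:ℕ) - 1 : ℕ):ℂ)) * c) := by
  rw [Matrix.mulVec_single]
  funext i
  rcases eq_or_ne i (⟨(s:ℕ) - 1, by omega⟩ : Fin (m+1)) with h | h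
  · subst h
    simp only [Emat, Matrix.of_apply, Pi.single_eq_same, Fin.val_mk]
    simp only [Pi.smul_apply, Matrix.col_apply, Matrix.of_apply, op_smul_eq_mul]
    rw [if_pos (by omega)]
  · have hne : (s:ℕ) ≠ (i:ℕ) + 1 := fun hc => h (Fin.ext (by simp only [Fin.val_mk]; omega))
    simp only [Emat, Pi.smul_apply, Matrix.col_apply, op_smul_eq_mul, Matrix.of_apply, if_neg hne, zero_mul]
    rw [Pi.single_eq_of_ne h]

lemma Ezero (m : ℕ) (c : ℂ) :
    (Emat m).mulVec (Pi.single (0 : Fin (m+1)) c) = 0 := by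
  rw [Matrix.mulVec_single]
  funext i
  simp [Emat]

lemma Fstep (m : ℕ) (s : Fin (m+1)) (hs : (s:ℕ) + 1 ≤ m) (c : ℂ) :
    (Fmat m).mulVec (Pi.single s c)
      = Pi.single (⟨(s:ℕ) + 1, by omega⟩ : Fin (m+1)) ((((s:ℕ) + 1 : ℕ):ℂ) * c) := by
  rw [Matrix.mulVec_single]
  funext i
  rcases eq_or_ne i (⟨(s:ℕ) + 1, by omega⟩ : Fin (m+1)) with h | h
  · subst h
    simp [Fmat]
    ring
  · have hne : (i:ℕ) ≠ (s:ℕ) + 1 := fun hc => h (Fin.ext (by simp only [Fin.val_mk]; omega))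
    simp only [Fmat, Pi.smul_apply, Matrix.col_apply, op_smul_eq_mul, Matrix.of_apply, if_neg hne, zero_mul]
    rw [Pi.single_eq_of_ne h]

lemma Epow (m : ℕ) : ∀ (j : ℕ) (k : Fin (m+1)) (c : ℂ), j ≤ (k:ℕ) →
    ((Emat m) ^ j).mulVec (Pi.single k c)
      = Pi.single (⟨(k:ℕ) - j, by omega⟩ : Fin (m+1))
          ((∏ i ∈ range j, ((m:ℂ) - (((k:ℕ) - 1 - i : ℕ):ℂ))) * c)
  | 0, k, c, _ => by
      simp only [pow_zero, Matrix.one_mulVec, prod_range_zero, one_mul]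
      congr
  | (j+1), k, c, h => by
      have hs' : 1 ≤ ((⟨(k:ℕ) - j, by omega⟩ : Fin (m+1)) : ℕ) := by
        simp only [Fin.val_mk]; omega
      rw [pow_succ', ← Matrix.mulVec_mulVec, Epow m j k c (by omega),
        Estep m _ hs', prod_range_succ]
      funext i
      simp only [Pi.single_apply, Fin.ext_iff, Fin.val_mk]
      have h1 : ((k:ℕ) - j - 1 : ℕ) = ((k:ℕ) - 1 - j : ℕ) := by omega
      rw [h1]
      by_cases hi : (i:ℕ) = (k:ℕ) - (j+1)
      · rw [if_pos hi, if_pos (by omega)]; ring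
      · rw [if_neg hi, if_neg (by omega)]

lemma EpowZero (m : ℕ) (j : ℕ) (k : Fin (m+1)) (c : ℂ) (h : (k:ℕ) < j) :
    ((Emat m) ^ j).mulVec (Pi.single k c) = 0 := by
  have hj : j = (j - (k:ℕ) - 1) + 1 + (k:ℕ) := by omega
  rw [hj, pow_add, pow_succ, ← Matrix.mulVec_mulVec, Epow m (k:ℕ) k c le_rfl,
    ← Matrix.mulVec_mulVec]
  have h0 : (⟨(k:ℕ) - (k:ℕ), by omega⟩ : Fin (m+1)) = 0 := by
    apply Fin.ext; simp
  rw [h0, Ezero, Matrix.mulVec_zero]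

lemma Fpow (m : ℕ) : ∀ (j : ℕ) (s : Fin (m+1)) (c : ℂ) (_ : (s:ℕ) + j ≤ m),
    ((Fmat m) ^ j).mulVec (Pi.single s c)
      = Pi.single (⟨(s:ℕ) + j, by omega⟩ : Fin (m+1))
          ((∏ i ∈ range j, ((((s:ℕ) + i + 1 : ℕ)):ℂ)) * c)
  | 0, s, c, _ => by
      simp only [pow_zero, Matrix.one_mulVec, prod_range_zero, one_mul]
      congr
  | (j+1), s, c, h => by
      have hs' : ((⟨(s:ℕ) + j, by omega⟩ : Fin (m+1)) : ℕ) + 1 ≤ m := by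
        simp only [Fin.val_mk]; omega
      rw [pow_succ', ← Matrix.mulVec_mulVec, Fpow m j s c (by omega),
        Fstep m _ hs', prod_range_succ]
      funext i
      simp only [Pi.single_apply, Fin.ext_iff, Fin.val_mk]
      by_cases hi : (i:ℕ) = (s:ℕ) + (j+1)
      · rw [if_pos hi, if_pos (by omega)]; ring
      · rw [if_neg hi, if_neg (by omega)]

lemma sum_mulVec' {ι : Type*} {n : Type*} [Fintype n] [DecidableEq n]
    (s : Finset ι) (A : ι → Matrix n n ℂ) (v : n → ℂ) :
    (∑ i ∈ s, A i).mulVec v = ∑ i ∈ s, (A i).mulVec v := by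
  induction s using Finset.cons_induction with
  | empty => simp [Matrix.zero_mulVec]
  | cons a s ha ih => simp only [Finset.sum_cons, Matrix.add_mulVec, ih]

/-- with `ν = m ω₁ - k α₁` the weight of `v^m_k` (so `(ν,α₁^∨) = m - 2k`),
`p((λ+ν/2,α₁^∨)-1; H,E,F) v^m_k = [ Π_{j=0}^{k-1} ((λ,α₁^∨)+m/2-j)/((λ,α₁^∨)-m/2+j) ] v^m_k`,
as rational functions of `l = (λ,α₁^∨)`, i.e. for every `l` avoiding the poles.
Here `(λ+ν/2,α₁^∨)-1 = l + (m-2k)/2 - 1`. -/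
theorem stmt7 (m : ℕ) (k : Fin (m+1)) (l : ℂ)
    (hgen : ∀ s : Fin (m+1), ∀ j ∈ Finset.range (m + 2),
      (l + ((m : ℂ) - 2 * (k : ℕ)) / 2 - 1) - ((m : ℂ) - 2 * (s : ℕ)) - (j : ℕ) ≠ 0)
    (hden : ∀ j ∈ Finset.range (k : ℕ), l - (m : ℂ) / 2 + (j : ℕ) ≠ 0) :
    Matrix.mulVec
        (pMat m (l + ((m : ℂ) - 2 * (k : ℕ)) / 2 - 1) (Hmat m) (Emat m) (Fmat m)) (vvec m k) =
      (∏ j ∈ Finset.range (k : ℕ),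
        (l + (m : ℂ) / 2 - (j : ℕ)) / (l - (m : ℂ) / 2 + (j : ℕ))) • vvec m k := by
  set t := l + ((m:ℂ) - 2 * ((k:ℕ):ℂ)) / 2 - 1 with ht
  have hkm : (k:ℕ) ≤ m := by omega
  have hgen' : ∀ (i : Fin (m+1)) (s : ℕ), s < m+2 → t - ((m:ℂ) - 2*(i:ℕ)) - s ≠ 0 := by
    intro i s hs
    exact hgen i s (Finset.mem_range.mpr hs)
  rw [pMat, sum_mulVec']
  have hterm : ∀ j ∈ range (m+2),
      Matrix.mulVec (((Nat.factorial j : ℂ))⁻¹ •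
        (Fmat m ^ j * Emat m ^ j *
          ((List.range j).map fun s =>
            Ring.inverse (t • (1 : Matrix (Fin (m+1)) (Fin (m+1)) ℂ) - Hmat m - (s:ℂ) • 1)).prod))
        (vvec m k)
      = (if j ≤ (k:ℕ) then
          (Nat.factorial j : ℂ)⁻¹ *
            ((∏ i ∈ range j, ((((k:ℕ) - j + i + 1 : ℕ)):ℂ)) *
             ((∏ i ∈ range j, ((m:ℂ) - (((k:ℕ) - 1 - i : ℕ):ℂ))) *
              (∏ s ∈ range j, (t - ((m:ℂ) - 2*((k:ℕ):ℂ)) - (s:ℕ))⁻¹)))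
         else 0) • vvec m k := by
    intro j hj
    rw [Finset.mem_range] at hj
    rw [Matrix.smul_mulVec, ← Matrix.mulVec_mulVec, ← Matrix.mulVec_mulVec]
    have hco : ((do let a ← List.range j; pure ((a:ℂ))) : List ℂ)
        = (List.range j).map (fun a : ℕ => (a:ℂ)) := by rw [List.map_eq_flatMap]; rfl
    rw [hco, List.map_map]
    have hP : Matrix.mulVec
        ((List.map ((fun s : ℂ =>
            Ring.inverse (t • (1 : Matrix (Fin (m+1)) (Fin (m+1)) ℂ) - Hmat m - s • 1)) ∘
          (fun a : ℕ => (a:ℂ))) (List.range j)).prod) (vvec m k)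
        = Pi.single k ((∏ s ∈ range j, (t - ((m:ℂ) - 2*((k:ℕ):ℂ)) - (s:ℕ))⁻¹) * 1) :=
      resProd m t k 1 j (fun i s hs => hgen' i s (by omega))
    rw [hP]
    by_cases hjk : j ≤ (k:ℕ)
    · rw [Epow m j k _ hjk, Fpow m j _ _ (by simp only [Fin.val_mk]; omega), if_pos hjk]
      funext i
      simp only [Pi.smul_apply, Pi.single_apply, vvec, smul_eq_mul, Fin.ext_iff, Fin.val_mk]
      have hval : ((k:ℕ) - j + j : ℕ) = (k:ℕ) := by omega
      rw [hval]
      by_cases hik : (i:ℕ) = (k:ℕ)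
      · rw [if_pos hik, if_pos hik]
        ring
      · rw [if_neg hik, if_neg hik]
        simp
    · rw [EpowZero m j k _ (by omega), Matrix.mulVec_zero, smul_zero, if_neg hjk, zero_smul]
  rw [Finset.sum_congr rfl hterm, ← Finset.sum_smul]
  congr 1
  have hsub : Finset.range ((k:ℕ)+1) ⊆ Finset.range (m+2) := by
    apply Finset.range_subset_range.mpr; omega
  rw [← Finset.sum_subset hsub (fun x _ hx => by
    rw [if_neg (by rw [Finset.mem_range] at hx; omega)])]
  have hss := scalarSum m (k:ℕ) hkm l hden
  rw [← ht] at hss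
  rw [← hss]
  apply Finset.sum_congr rfl
  intro j hj
  rw [Finset.mem_range] at hj
  rw [if_pos (by omega)]


end
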